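/- Let E be a finite-dimensional complex inner product space, regarded also as a real inner product space via the real part of its Hermitian inner product, and let J : E → E denote multiplication by i. Let V ⊆ E be a 2-dimensional real linear subspace with orthogonal projection P_V : E → V. Then the quantity ‖P_V(J v)‖ is the same for all unit vectors v ∈ V; equivalently, there exists φ ∈ [0,π/2] such that ‖P_V(J v)‖ = cos(φ)·‖v‖ for every v ∈ V. -/

import Mathlib

open scoped RealInnerProductSpace

theorem two_dim_real_subspace_constant_kahler_angle
    (E : Type*) [NormedAddCommGroup E] [InnerProductSpace ℂ E] [FiniteDimensional ℂ E] :
    letI : InnerProductSpace ℝ E := InnerProductSpace.complexToReal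
    ∀ V : Submodule ℝ E, Module.finrank ℝ V = 2 →
      ∃ φ ∈ Set.Icc (0 : ℝ) (Real.pi / 2), ∀ v ∈ V,
        ‖(Submodule.orthogonalProjectionOnto V ((Complex.I : ℂ) • v) : E)‖ = Real.cos φ * ‖v‖ := by
  letI : InnerProductSpace ℝ E := InnerProductSpace.complexToReal
  intro V hV
  haveI : FiniteDimensional ℝ E := FiniteDimensional.trans ℝ ℂ E
  let b : OrthonormalBasis (Fin 2) ℝ V := (stdOrthonormalBasis ℝ V).reindex (finCongr hV)
  -- basic facts about the basis
  have hb := b.orthonormal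
  have hnorm : ∀ i, ‖(b i : E)‖ = 1 := fun i => by
    exact hb.1 i
  have hij : ⟪(b 0 : E), (b 1 : E)⟫ = 0 := by
    have := hb.2 (i := 0) (j := 1) (by decide)
    exact this
  -- the constant α
  set α : ℝ := ⟪(b 0 : E), (Complex.I : ℂ) • (b 1 : E)⟫ with hα
  have hα1 : |α| ≤ 1 := by
    calc |α| ≤ ‖(b 0 : E)‖ * ‖(Complex.I : ℂ) • (b 1 : E)‖ := abs_real_inner_le_norm _ _
    _ = 1 := by rw [norm_smul, hnorm, hnorm]; simp
  -- key: ⟪x, I • x⟫_ℝ = 0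
  have hskew : ∀ x : E, ⟪x, (Complex.I : ℂ) • x⟫ = 0 := fun x => by
    have : (inner ℂ x ((Complex.I : ℂ) • x) : ℂ) = Complex.I * inner ℂ x x := by
      rw [inner_smul_right]
    simp only [real_inner_eq_re_inner ℂ, this]
    rw [← inner_self_ofReal_re]
    simp [Complex.ext_iff]
  -- antisymmetry: ⟪y, I • x⟫ = -⟪x, I • y⟫
  have hanti : ∀ x y : E, ⟪y, (Complex.I : ℂ) • x⟫ = -⟪x, (Complex.I : ℂ) • y⟫ := by
    intro x y
    have h := hskew (x + y)
    have h1 := hskew x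
    have h2 := hskew y
    rw [smul_add, inner_add_left, inner_add_right, inner_add_right] at h
    linarith
  refine ⟨Real.arccos |α|, ⟨Real.arccos_nonneg _, by
    rw [Real.arccos_le_pi_div_two]; exact abs_nonneg _⟩, ?_⟩
  intro v hv
  rw [Real.cos_arccos (by linarith [abs_nonneg α]) hα1]
  set a0 : ℝ := ⟪(b 0 : E), v⟫ with ha0
  set a1 : ℝ := ⟪(b 1 : E), v⟫ with ha1
  have hv_eq : v = a0 • (b 0 : E) + a1 • (b 1 : E) := by
    have h := congrArg (Subtype.val) (b.sum_repr' (⟨v, hv⟩ : V))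
    simp only [Fin.sum_univ_two, Submodule.coe_inner, Submodule.coe_add,
      Submodule.coe_smul] at h
    exact h.symm
  have hI10 : ⟪(b 1 : E), (Complex.I : ℂ) • (b 0 : E)⟫ = -α := by
    rw [hanti]
  have h0 : ⟪(b 0 : E), (Complex.I : ℂ) • v⟫ = a1 * α := by
    conv_lhs => rw [hv_eq]
    rw [smul_add, smul_comm, smul_comm (Complex.I : ℂ) a1, inner_add_right,
      real_inner_smul_right, real_inner_smul_right, hskew]
    ring
  have h1 : ⟪(b 1 : E), (Complex.I : ℂ) • v⟫ = -(a0 * α) := by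
    conv_lhs => rw [hv_eq]
    rw [smul_add, smul_comm, smul_comm (Complex.I : ℂ) a1, inner_add_right,
      real_inner_smul_right, real_inner_smul_right, hskew, hI10]
    ring
  have hns : ∀ c0 c1 : ℝ, ‖c0 • (b 0 : E) + c1 • (b 1 : E)‖ ^ 2 = c0 ^ 2 + c1 ^ 2 := by
    intro c0 c1
    rw [norm_add_sq_real, norm_smul, norm_smul, real_inner_smul_left,
      real_inner_smul_right, hij, hnorm, hnorm]
    simp [mul_pow, sq_abs]
  have hproj : (Submodule.orthogonalProjectionOnto V ((Complex.I : ℂ) • v) : E)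
      = (a1 * α) • (b 0 : E) + (-(a0 * α)) • (b 1 : E) := by
    have h := congrArg (Subtype.val)
      (b.orthogonalProjectionOnto_apply_eq_sum (U := V) ((Complex.I : ℂ) • v))
    simp only [Fin.sum_univ_two, Submodule.coe_add, Submodule.coe_smul] at h
    rw [h, h0, h1]
  have hsq : ‖(Submodule.orthogonalProjectionOnto V ((Complex.I : ℂ) • v) : E)‖ ^ 2
      = (|α| * ‖v‖) ^ 2 := by
    have hvn : ‖v‖ ^ 2 = a0 ^ 2 + a1 ^ 2 := by rw [hv_eq, hns]
    rw [hproj, hns, mul_pow |α| ‖v‖, sq_abs, hvn]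
    ring
  rw [← Real.sqrt_sq (norm_nonneg (Submodule.orthogonalProjectionOnto V ((Complex.I : ℂ) • v) : E)),
    hsq, Real.sqrt_sq (by positivity)]
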